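/- Fix integers n > m ≥ k ≥ 1, a number field K of degree d, and a constant c_sup > 0. There exists a constant C > 0 (depending on c_sup, K, n, m, k) such that for all T ≥ 1: if D ∈ M_{k×m}(K) is an echelon matrix for which there exists A ∈ M_n(Λ_D) with rank(A) = k and ‖A‖ ≤ c_sup·T (i.e. D ∈ F_k(T)), then H(D) ≤ C·T^{kd}. -/

import Mathlib

noncomputable section
open NumberField NumberField.InfinitePlace MeasureTheory Module Submodule Matrix
attribute [local instance] Classical.propDecidable
set_option synthInstance.maxHeartbeats 1000000
set_option maxHeartbeats 1000000

/-! Setup: the space `K_ℝ = K ⊗ ℝ`, realized as the mixed space `ℝ^{r₁} × ℂ^{r₂}`, together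
with the Euclidean structure given by `‖x‖² = |Δ_K|^{-2/d}·Tr(x·x̄)`, extended coordinatewise
to vectors and matrices over `K_ℝ`. This Euclidean structure is realized through explicit
linear coordinates with values in `EuclideanSpace ℝ _`. -/

namespace Paper

variable (K : Type) [Field K] [NumberField K]

/-- The mixed space `K ⊗ ℝ ≅ ℝ^{r₁} × ℂ^{r₂}`. -/
abbrev MS : Type := NumberField.mixedEmbedding.mixedSpace K

/-- Real-coordinate index type for `K_ℝ`: one coordinate for each real place and two for each
complex place. -/
abbrev RIx : Type := {w : InfinitePlace K // IsReal w} ⊕ ({w : InfinitePlace K // IsComplex w} × Bool)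

/-- The scaling factor `|Δ_K|^{-1/d}`. -/
def sK : ℝ := (Int.natAbs (NumberField.discr K) : ℝ) ^ (-(1:ℝ) / (finrank ℚ K))

lemma sK_pos : 0 < sK K := by
  apply Real.rpow_pos_of_pos
  have := NumberField.discr_ne_zero K
  exact_mod_cast Int.natAbs_pos.mpr this

/-- Coordinates of `K_ℝ` realizing the Euclidean structure `‖x‖² = |Δ_K|^{-2/d}·Tr(x·x̄)`:
a real place `v` contributes the coordinate `|Δ_K|^{-1/d}·x_v` and a complex place `w`
contributes the two coordinates `|Δ_K|^{-1/d}·√2·Re(x_w)` and `|Δ_K|^{-1/d}·√2·Im(x_w)`,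
so that the standard Euclidean norm of the coordinates equals the norm above. -/
def eucMap : MS K ≃ₗ[ℝ] EuclideanSpace ℝ (RIx K) where
  toFun x := WithLp.toLp 2 (fun q => Sum.rec (fun v => sK K * x.1 v)
    (fun p => (sK K * Real.sqrt 2) * (if p.2 then (x.2 p.1).im else (x.2 p.1).re)) q)
  invFun y := (fun v => (sK K)⁻¹ * y (.inl v),
               fun w => ⟨(sK K * Real.sqrt 2)⁻¹ * y (.inr (w, false)),
                         (sK K * Real.sqrt 2)⁻¹ * y (.inr (w, true))⟩)
  map_add' x y := by
    ext q
    rcases q with v | ⟨w, b⟩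
    · show sK K * (x.1 v + y.1 v) = sK K * x.1 v + sK K * y.1 v
      ring
    · show (sK K * Real.sqrt 2) * (if b then (x.2 w + y.2 w).im else (x.2 w + y.2 w).re) = _
      cases b <;> simp [Complex.add_re, Complex.add_im] <;> ring
  map_smul' c x := by
    ext q
    rcases q with v | ⟨w, b⟩
    · show sK K * (c * x.1 v) = c * (sK K * x.1 v)
      ring
    · show (sK K * Real.sqrt 2) * (if b then (c • x.2 w).im else (c • x.2 w).re) = _
      cases b <;> simp [Complex.smul_re, Complex.smul_im] <;> ring
  left_inv x := by
    have h1 : sK K ≠ 0 := ne_of_gt (sK_pos K)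
    have h2 : sK K * Real.sqrt 2 ≠ 0 := by
      have h3 : (0:ℝ) < Real.sqrt 2 := Real.sqrt_pos.mpr (by norm_num)
      positivity
    refine Prod.ext (funext fun v => ?_) (funext fun w => ?_)
    · show (sK K)⁻¹ * (sK K * x.1 v) = x.1 v
      field_simp
    · show (⟨(sK K * Real.sqrt 2)⁻¹ * ((sK K * Real.sqrt 2) * (x.2 w).re),
            (sK K * Real.sqrt 2)⁻¹ * ((sK K * Real.sqrt 2) * (x.2 w).im)⟩ : ℂ) = x.2 w
      apply Complex.ext <;> field_simp
  right_inv y := by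
    have h1 : sK K ≠ 0 := ne_of_gt (sK_pos K)
    have h2 : sK K * Real.sqrt 2 ≠ 0 := by
      have h3 : (0:ℝ) < Real.sqrt 2 := Real.sqrt_pos.mpr (by norm_num)
      positivity
    ext q
    rcases q with v | ⟨w, b⟩
    · show sK K * ((sK K)⁻¹ * y (.inl v)) = y (.inl v)
      field_simp
    · cases b
      · show (sK K * Real.sqrt 2) * ((sK K * Real.sqrt 2)⁻¹ * y (.inr (w, false))) = _
        field_simp
      · show (sK K * Real.sqrt 2) * ((sK K * Real.sqrt 2)⁻¹ * y (.inr (w, true))) = _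
        field_simp

/-- Euclidean coordinates for vectors in `K_ℝ^m`. -/
def eucVec (m : ℕ) : (Fin m → MS K) ≃ₗ[ℝ] EuclideanSpace ℝ (Fin m × RIx K) where
  toFun x := WithLp.toLp 2 (fun p => eucMap K (x p.1) p.2)
  invFun y := fun i => (eucMap K).symm (WithLp.toLp 2 (fun q => y (i, q)))
  map_add' x y := by
    ext p
    show eucMap K (x p.1 + y p.1) p.2 = eucMap K (x p.1) p.2 + eucMap K (y p.1) p.2
    rw [map_add]; rfl
  map_smul' c x := by
    ext p
    show eucMap K (c • x p.1) p.2 = c * eucMap K (x p.1) p.2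
    rw [_root_.map_smul]; rfl
  left_inv x := by
    funext i
    show (eucMap K).symm (WithLp.toLp 2 (fun q => eucMap K (x i) q)) = x i
    exact (eucMap K).symm_apply_apply (x i)
  right_inv y := by
    ext p
    show eucMap K ((eucMap K).symm (WithLp.toLp 2 (fun q => y (p.1, q)))) p.2 = y p
    rw [(eucMap K).apply_symm_apply]

/-- Euclidean coordinates for matrices in `M_{n×m}(K_ℝ)`. -/
def eucMat (n m : ℕ) :
    Matrix (Fin n) (Fin m) (MS K) ≃ₗ[ℝ] EuclideanSpace ℝ (Fin n × Fin m × RIx K) where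
  toFun A := WithLp.toLp 2 (fun p => eucMap K (A p.1 p.2.1) p.2.2)
  invFun y := Matrix.of fun i j => (eucMap K).symm (WithLp.toLp 2 (fun q => y (i, j, q)))
  map_add' x y := by
    ext p
    show eucMap K (x p.1 p.2.1 + y p.1 p.2.1) p.2.2 = _
    rw [map_add]; rfl
  map_smul' c x := by
    ext p
    show eucMap K (c • x p.1 p.2.1) p.2.2 = c * eucMap K (x p.1 p.2.1) p.2.2
    rw [_root_.map_smul]; rfl
  left_inv x := by
    funext i j
    show (eucMap K).symm (WithLp.toLp 2 (fun q => eucMap K (x i j) q)) = x i j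
    exact (eucMap K).symm_apply_apply (x i j)
  right_inv y := by
    ext p
    show eucMap K ((eucMap K).symm (WithLp.toLp 2 (fun q => y (p.1, p.2.1, q)))) p.2.2 = y p
    rw [(eucMap K).apply_symm_apply]

/-- The Euclidean norm on `K_ℝ^m` (the `l²`-norm from `‖x‖² = |Δ_K|^{-2/d}·Tr(x·x̄)`,
extended coordinatewise). -/
def vnorm {m : ℕ} (x : Fin m → MS K) : ℝ := ‖eucVec K m x‖

/-- The Euclidean norm on `M_{n×m}(K_ℝ)`. -/
def mnorm {n m : ℕ} (A : Matrix (Fin n) (Fin m) (MS K)) : ℝ := ‖eucMat K n m A‖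

/-- The embedding of `M_{n×m}(O_K)` into `M_{n×m}(K_ℝ)`. -/
def embMat {n m : ℕ} (A : Matrix (Fin n) (Fin m) (𝓞 K)) : Matrix (Fin n) (Fin m) (MS K) :=
  A.map (fun a => NumberField.mixedEmbedding K (algebraMap (𝓞 K) K a))

/-- The rank (over `K`) of a matrix with entries in `O_K`. -/
def rankOK {n m : ℕ} (A : Matrix (Fin n) (Fin m) (𝓞 K)) : ℕ :=
  (A.map (algebraMap (𝓞 K) K)).rank

end Paper

/-! Generic notions for Euclidean spaces: oscillation, admissible functions, integration over
subspaces (with respect to the induced Lebesgue measure), covering radius and height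
(covolume) of lattices. -/

namespace Paper

/-- The oscillation function `E_f(x, ε) = sup_{‖x−y‖ ≤ ε} |f(x)−f(y)|`. -/
def Ef {V : Type} [NormedAddCommGroup V] (f : V → ℝ) (x : V) (ε : ℝ) : ℝ :=
  ⨆ y : {y : V // ‖x - y‖ ≤ ε}, |f x - f (y : V)|

/-- Integral of `g` over the subspace `W ⊆ V` with respect to the Lebesgue measure induced
on `W` by the inner product of `V` (computed in an orthonormal coordinate system of `W`). -/
def subInt {V : Type} [NormedAddCommGroup V] [InnerProductSpace ℝ V] [FiniteDimensional ℝ V]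
    (W : Submodule ℝ V) (g : V → ℝ) : ℝ :=
  ∫ y : EuclideanSpace ℝ (Fin (Module.finrank ℝ W)),
    g (((stdOrthonormalBasis ℝ W).repr.symm y : W) : V)

/-- A function on a Euclidean space is admissible with constant `Cf` if it is compactly
supported, measurable, and for every `ε > 0` and every nonzero real subspace `W`, the
integral of its oscillation `E_f(·, ε)` over `W` is at most `Cf·ε`. -/
def IsAdmissible {V : Type} [NormedAddCommGroup V] [InnerProductSpace ℝ V]
    [FiniteDimensional ℝ V] [MeasurableSpace V] [BorelSpace V] (f : V → ℝ) (Cf : ℝ) : Prop :=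
  HasCompactSupport f ∧ Measurable f ∧ 0 < Cf ∧
    ∀ ε : ℝ, 0 < ε → ∀ W : Submodule ℝ V, W ≠ ⊥ →
      subInt W (fun x => Ef f x ε) ≤ Cf * ε

/-- The covering radius of a subset `S` of a normed space:
`ρ(S) = sup_{x ∈ span ℝ S} inf_{v ∈ S} ‖x−v‖`. -/
def covRadV {V : Type} [NormedAddCommGroup V] [Module ℝ V] (S : Set V) : ℝ :=
  ⨆ x : Submodule.span ℝ S, ⨅ v : S, ‖(x : V) - (v : V)‖

/-- The height `H(L) = vol((L⊗ℝ)/L)` of a `ℤ`-submodule `L` of a Euclidean space, computed as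
the covolume of the image of `L` in an orthonormal coordinate system of `span ℝ L`. -/
def hgtV {V : Type} [NormedAddCommGroup V] [InnerProductSpace ℝ V] [FiniteDimensional ℝ V]
    (L : Submodule ℤ V) : ℝ :=
  ZLattice.covolume
    ((L.comap (((Submodule.span ℝ (L : Set V)).subtype).restrictScalars ℤ)).map
      (((stdOrthonormalBasis ℝ (Submodule.span ℝ (L : Set V))).repr.toLinearEquiv.restrictScalars
        ℤ).toLinearMap)) MeasureTheory.volume

end Paper

/-! Echelon matrices over `K`, the lattices `Λ_D`, the denominators `𝔇(D)`, heights,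
covering radii, and integrals `∫_{M_{n×k}(K_ℝ)} f(xD) dx`. -/

namespace Paper

variable (K : Type) [Field K] [NumberField K]

/-- `D` is a (full-rank) row-reduced echelon matrix: there are strictly increasing pivot
columns, pivot entries are `1`, entries to the left of a pivot vanish, and pivot columns
vanish in the other rows. -/
def IsEchelon {k m : ℕ} (D : Matrix (Fin k) (Fin m) K) : Prop :=
  ∃ p : Fin k → Fin m, StrictMono p ∧ (∀ i, D i (p i) = 1) ∧
    (∀ i (j : Fin m), (j : ℕ) < (p i : ℕ) → D i j = 0) ∧
    (∀ i i' : Fin k, i ≠ i' → D i' (p i) = 0)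

/-- The subgroup `{v ∈ O_K^k : Dᵀv ∈ O_K^m}` of `O_K^k`. -/
def denomGroup {k m : ℕ} (D : Matrix (Fin k) (Fin m) K) : AddSubgroup (Fin k → 𝓞 K) where
  carrier := {v | ∀ j, IsIntegral ℤ (∑ i, (algebraMap (𝓞 K) K (v i)) * D i j)}
  zero_mem' := by
    intro j
    simp only [Pi.zero_apply, map_zero, zero_mul, Finset.sum_const_zero]
    exact isIntegral_zero
  add_mem' {a b} ha hb := by
    intro j
    have : (∑ i, (algebraMap (𝓞 K) K ((a + b) i)) * D i j)
        = (∑ i, (algebraMap (𝓞 K) K (a i)) * D i j)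
          + (∑ i, (algebraMap (𝓞 K) K (b i)) * D i j) := by
      rw [← Finset.sum_add_distrib]
      congr 1; funext i
      simp [map_add, add_mul]
    rw [this]
    exact (ha j).add (hb j)
  neg_mem' {a} ha := by
    intro j
    have : (∑ i, (algebraMap (𝓞 K) K ((-a) i)) * D i j)
        = -(∑ i, (algebraMap (𝓞 K) K (a i)) * D i j) := by
      rw [← Finset.sum_neg_distrib]
      congr 1; funext i
      simp
    rw [this]
    exact (ha j).neg

/-- The denominator `𝔇(D) = [O_K^k : {v ∈ O_K^k : Dᵀv ∈ O_K^m}]`. -/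
def frD {k m : ℕ} (D : Matrix (Fin k) (Fin m) K) : ℕ := (denomGroup K D).index

/-- The set of `K`-rational rows `(M_{1×k}(K)·D) ∩ M_{1×m}(O_K)` (i.e. `Λ_D` at the level
of `K`-points). -/
def rowSpanInt {k m : ℕ} (D : Matrix (Fin k) (Fin m) K) : Set (Fin m → K) :=
  {v | (∃ c : Fin k → K, v = fun j => ∑ i, c i * D i j) ∧ ∀ j, IsIntegral ℤ (v j)}

/-- The lattice `Λ_D = (M_{1×k}(K)·D) ∩ M_{1×m}(O_K)`, embedded in `K_ℝ^m`. -/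
def LamD {k m : ℕ} (D : Matrix (Fin k) (Fin m) K) : Set (Fin m → MS K) :=
  (fun v : Fin m → K => fun j => NumberField.mixedEmbedding K (v j)) '' rowSpanInt K D

/-- The height `H(D) = H(Λ_D)`. -/
def hgtD {k m : ℕ} (D : Matrix (Fin k) (Fin m) K) : ℝ :=
  hgtV (Submodule.span ℤ ((eucVec K m) '' LamD K D))

/-- The covering radius `ρ(Λ_D)`. -/
def rhoD {k m : ℕ} (D : Matrix (Fin k) (Fin m) K) : ℝ :=
  covRadV ((eucVec K m) '' LamD K D)

/-- The integral `∫_{M_{n×k}(K_ℝ)} f(xD) dx` with respect to the Lebesgue measure induced by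
the Euclidean structure on `M_{n×k}(K_ℝ)`. -/
def intFD {n m k : ℕ} (f : Matrix (Fin n) (Fin m) (MS K) → ℝ)
    (D : Matrix (Fin k) (Fin m) K) : ℝ :=
  ∫ y : EuclideanSpace ℝ (Fin n × Fin k × RIx K),
    f ((eucMat K n k).symm y * D.map (NumberField.mixedEmbedding K))

/-- Admissibility for functions on `M_{n×m}(K_ℝ)`, read through the Euclidean coordinates. -/
def AdmissibleM {n m : ℕ} (f : Matrix (Fin n) (Fin m) (MS K) → ℝ) (Cf : ℝ) : Prop :=
  IsAdmissible (fun y : EuclideanSpace ℝ (Fin n × Fin m × RIx K) => f ((eucMat K n m).symm y)) Cf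

/-- The family `F_k(T)`: echelon matrices `D ∈ M_{k×m}(K)` such that some `A ∈ M_n(Λ_D)` has
`rank(A) = k` and `‖A‖ ≤ c_sup·T`. -/
def FkT (csup : ℝ) (n k m : ℕ) (T : ℝ) : Set (Matrix (Fin k) (Fin m) K) :=
  {D | IsEchelon K D ∧ ∃ A : Matrix (Fin n) (Fin m) K,
    (∀ i, A i ∈ rowSpanInt K D) ∧ A.rank = k ∧
      mnorm K (A.map (NumberField.mixedEmbedding K)) ≤ csup * T}

end Paper

/-!
STATEMENT 14: Fix integers n > m ≥ k ≥ 1, a number field K of degree d, and a constant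
c_sup > 0. There exists a constant C > 0 (depending on c_sup, K, n, m, k) such that for all
T ≥ 1: if D ∈ M_{k×m}(K) is an echelon matrix for which there exists A ∈ M_n(Λ_D) with
rank(A) = k and ‖A‖ ≤ c_sup·T (i.e. D ∈ F_k(T)), then H(D) ≤ C·T^{kd}.
-/

open Paper NumberField


lemma coord_abs_le_norm (r : ℕ) (x : EuclideanSpace ℝ (Fin r)) (q : Fin r) : |x q| ≤ ‖x‖ := by
  rw [EuclideanSpace.norm_eq, ← Real.sqrt_sq_eq_abs]
  apply Real.sqrt_le_sqrt
  have : |x q| ^ 2 ≤ ∑ i, ‖x i‖ ^ 2 := by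
    refine Finset.single_le_sum (f := fun i => ‖x i‖^2) (fun i _ => by positivity)
      (Finset.mem_univ q) |>.trans_eq' ?_
    simp [sq_abs]
  simpa [sq_abs] using this

lemma box_volume (r : ℕ) (R : ℝ) :
    volume {x : EuclideanSpace ℝ (Fin r) | ∀ q, |x q| ≤ R} = ENNReal.ofReal (2*R) ^ r := by
  have : {x : EuclideanSpace ℝ (Fin r) | ∀ q, |x q| ≤ R}
      = (MeasurableEquiv.toLp 2 (Fin r → ℝ)).symm ⁻¹' (Set.pi Set.univ fun _ => Set.Icc (-R) R) := by
    ext x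
    simp [abs_le, Pi.le_def, forall_and]
  rw [this, MeasurePreserving.measure_preimage
    (EuclideanSpace.volume_preserving_symm_measurableEquiv_toLp (Fin r))
    (MeasurableSet.univ_pi (fun _ => measurableSet_Icc)).nullMeasurableSet, volume_pi_pi]
  simp [Real.volume_Icc]
  ring_nf
  rw [ENNReal.ofReal_mul' (by norm_num : (0:ℝ) ≤ 2), mul_pow]
  norm_num

lemma covol_le (r : ℕ) (Λ : Submodule ℤ (EuclideanSpace ℝ (Fin r)))
    [DiscreteTopology Λ] [IsZLattice ℝ Λ] {ι : Type} [Fintype ι] [DecidableEq ι]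
    (c : Basis ι ℝ (EuclideanSpace ℝ (Fin r))) (hc : ∀ i, (c i) ∈ Λ)
    {R : ℝ} (hR : ∑ i, ‖c i‖ ≤ R) :
    ZLattice.covolume Λ volume ≤ (2*R)^r := by
  have hR0 : 0 ≤ R := le_trans (Finset.sum_nonneg fun i _ => norm_nonneg _) hR
  -- reindex a ℤ-basis of Λ by ι
  have hcard : Fintype.card (Free.ChooseBasisIndex ℤ ↥Λ) = Fintype.card ι := by
    rw [← finrank_eq_card_chooseBasisIndex, ZLattice.rank ℝ Λ, finrank_euclideanSpace,
      Fintype.card_fin, ← finrank_eq_card_basis c, finrank_euclideanSpace, Fintype.card_fin]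
  let bΛ : Basis ι ℤ Λ := (Free.chooseBasis ℤ Λ).reindex (Fintype.equivOfCardEq hcard)
  -- covolume formula
  rw [ZLattice.covolume_eq_det_mul_measureReal Λ volume bΛ c, measureReal_def]
  -- the transition matrix
  set Q : Matrix ι ι ℤ := fun j i => bΛ.repr ⟨c i, hc i⟩ j with hQ
  have hci : ∀ i, (c i) = ∑ j, ((Q j i : ℝ)) • ((bΛ j : EuclideanSpace ℝ (Fin r))) := by
    intro i
    have := Basis.sum_repr bΛ ⟨c i, hc i⟩
    have := congrArg (Submodule.subtype Λ) this
    simp only [map_sum, map_zsmul, Submodule.coe_subtype] at this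
    rw [← this]
    refine Finset.sum_congr rfl fun j _ => ?_
    rw [Int.cast_smul_eq_zsmul]
  set P : Matrix ι ι ℝ := c.toMatrix (fun j => (bΛ j : EuclideanSpace ℝ (Fin r))) with hP
  have hPQ : P * Q.map (Int.cast : ℤ → ℝ) = 1 := by
    ext l i
    rw [Matrix.mul_apply]
    have : c.repr (∑ j, ((Q j i : ℝ)) • ((bΛ j : EuclideanSpace ℝ (Fin r)))) l
        = ∑ j, P l j * (Q j i : ℝ) := by
      simp only [map_sum, LinearEquiv.map_smul, Finsupp.coe_finset_sum, Finset.sum_apply,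
        Finsupp.coe_smul, Pi.smul_apply, smul_eq_mul]
      exact Finset.sum_congr rfl fun j _ => by rw [hP, Basis.toMatrix_apply]; ring
    simp only [Matrix.map_apply]
    rw [← this, ← hci, Basis.repr_self, Matrix.one_apply]
    simp [Finsupp.single_apply, eq_comm]
  have hdet : P.det * ((Q.det : ℤ) : ℝ) = 1 := by
    have h0 := congrArg Matrix.det hPQ
    rw [Matrix.det_mul, Matrix.det_one] at h0
    have h1 : (Q.map (Int.cast : ℤ → ℝ)).det = ((Q.det : ℤ) : ℝ) := by
      have : (Q.map (Int.cast : ℤ → ℝ)) = (Int.castRingHom ℝ).mapMatrix Q := rfl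
      rw [this, ← RingHom.map_det]
      simp
    rwa [h1] at h0
  have hQne : (Q.det : ℤ) ≠ 0 := by
    intro h
    rw [h] at hdet; simp at hdet
  have habs : |P.det| ≤ 1 := by
    have h1 : (1:ℝ) ≤ |((Q.det : ℤ) : ℝ)| := by
      rw [← Int.cast_abs]
      exact_mod_cast Int.one_le_abs hQne
    have := congrArg abs hdet
    rw [abs_mul, abs_one] at this
    nlinarith [abs_nonneg P.det]
  have hdet_eq : |c.det fun j => ((bΛ j : EuclideanSpace ℝ (Fin r)))| = |P.det| := by
    rw [Basis.det_apply]
  -- measure of fundamental domain ≤ box volume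
  have hsub : ZSpan.fundamentalDomain c ⊆ {x : EuclideanSpace ℝ (Fin r) | ∀ q, |x q| ≤ R} := by
    intro x hx q
    have h1 : ‖x‖ ≤ ∑ i, ‖c i‖ := by
      rw [← ZSpan.fract_eq_self.mpr hx]
      exact ZSpan.norm_fract_le c x
    exact le_trans (coord_abs_le_norm r x q) (le_trans h1 hR)
  have hvol : (volume (ZSpan.fundamentalDomain c)).toReal ≤ (2*R)^r := by
    have h1 : volume (ZSpan.fundamentalDomain c) ≤ ENNReal.ofReal (2*R) ^ r := by
      rw [← box_volume]
      exact measure_mono hsub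
    have h2 : (ENNReal.ofReal (2*R) ^ r).toReal = (2*R)^r := by
      rw [ENNReal.toReal_pow, ENNReal.toReal_ofReal (by linarith)]
    calc (volume (ZSpan.fundamentalDomain c)).toReal
        ≤ (ENNReal.ofReal (2*R) ^ r).toReal := ENNReal.toReal_mono (ENNReal.pow_ne_top ENNReal.ofReal_ne_top) h1
      _ = (2*R)^r := h2
  calc |c.det fun j => ((bΛ j : EuclideanSpace ℝ (Fin r)))| * (volume (ZSpan.fundamentalDomain c)).toReal
      ≤ 1 * (2*R)^r := by
        apply mul_le_mul (hdet_eq ▸ habs) hvol (ENNReal.toReal_nonneg) zero_le_one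
    _ = (2*R)^r := one_mul _
section NormLemmas
namespace Paper
variable (K : Type) [Field K] [NumberField K]

/-- squared norm of the Euclidean coordinates of an element of `K_ℝ`. -/
def msq (z : MS K) : ℝ := ∑ q : RIx K, (eucMap K z q)^2

lemma msq_nonneg (z : MS K) : 0 ≤ msq K z :=
  Finset.sum_nonneg fun q _ => sq_nonneg _

lemma eucMap_norm_eq (z : MS K) : ‖eucMap K z‖ = Real.sqrt (msq K z) := by
  rw [EuclideanSpace.norm_eq]
  congr 1
  exact Finset.sum_congr rfl fun q _ => by rw [Real.norm_eq_abs, sq_abs]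

lemma msq_eq (z : MS K) :
    msq K z = ∑ v, (sK K * z.1 v)^2
      + ∑ w, (sK K * Real.sqrt 2)^2 * Complex.normSq (z.2 w) := by
  rw [msq, Fintype.sum_sum_type]
  congr 1
  rw [Fintype.sum_prod_type]
  refine Finset.sum_congr rfl fun w _ => ?_
  rw [Fintype.sum_bool]
  show ((sK K * Real.sqrt 2) * (z.2 w).im)^2 + ((sK K * Real.sqrt 2) * (z.2 w).re)^2 = _
  rw [Complex.normSq_apply]
  ring

lemma sq_coeff_real_le (z : MS K) (v : {w : InfinitePlace K // IsReal w}) :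
    (z.1 v)^2 ≤ msq K z / (sK K)^2 := by
  have hs := sK_pos K
  rw [le_div_iff₀ (by positivity)]
  rw [msq_eq]
  have h1 : (sK K * z.1 v)^2 ≤ ∑ v', (sK K * z.1 v')^2 :=
    Finset.single_le_sum (f := fun v' => (sK K * z.1 v')^2) (fun _ _ => sq_nonneg _)
      (Finset.mem_univ v)
  have h2 : (0:ℝ) ≤ ∑ w, (sK K * Real.sqrt 2)^2 * Complex.normSq (z.2 w) :=
    Finset.sum_nonneg fun w _ => mul_nonneg (sq_nonneg _) (Complex.normSq_nonneg _)
  nlinarith [h1, h2]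

lemma normSq_coeff_le (z : MS K) (w : {w : InfinitePlace K // IsComplex w}) :
    Complex.normSq (z.2 w) ≤ msq K z / (sK K)^2 := by
  have hs := sK_pos K
  rw [le_div_iff₀ (by positivity)]
  rw [msq_eq]
  have h1 : (sK K * Real.sqrt 2)^2 * Complex.normSq (z.2 w)
      ≤ ∑ w', (sK K * Real.sqrt 2)^2 * Complex.normSq (z.2 w') :=
    Finset.single_le_sum (f := fun w' => (sK K * Real.sqrt 2)^2 * Complex.normSq (z.2 w'))
      (fun _ _ => mul_nonneg (sq_nonneg _) (Complex.normSq_nonneg _)) (Finset.mem_univ w)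
  have h2 : (0:ℝ) ≤ ∑ v, (sK K * z.1 v)^2 := Finset.sum_nonneg fun _ _ => sq_nonneg _
  have h3 : (sK K * Real.sqrt 2)^2 = 2 * (sK K)^2 := by
    rw [mul_pow, Real.sq_sqrt (by norm_num : (2:ℝ) ≥ 0)]
    ring
  nlinarith [Complex.normSq_nonneg (z.2 w)]

lemma msq_mul_le (z y : MS K) :
    msq K (z * y) ≤ (msq K z / (sK K)^2) * msq K y := by
  have hB1 := sq_coeff_real_le K z
  have hB2 := normSq_coeff_le K z
  rw [msq_eq K (z * y), msq_eq K y, mul_add, Finset.mul_sum, Finset.mul_sum]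
  have hzy1 : ∀ v, (z * y).1 v = z.1 v * y.1 v := fun v => rfl
  have hzy2 : ∀ w, (z * y).2 w = z.2 w * y.2 w := fun w => rfl
  apply add_le_add
  · refine Finset.sum_le_sum fun v _ => ?_
    rw [hzy1]
    have : (sK K * (z.1 v * y.1 v))^2 = (z.1 v)^2 * (sK K * y.1 v)^2 := by ring
    rw [this]
    exact mul_le_mul_of_nonneg_right (hB1 v) (sq_nonneg _)
  · refine Finset.sum_le_sum fun w _ => ?_
    rw [hzy2, Complex.normSq_mul]
    have : (sK K * Real.sqrt 2)^2 * (Complex.normSq (z.2 w) * Complex.normSq (y.2 w))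
        = Complex.normSq (z.2 w) * ((sK K * Real.sqrt 2)^2 * Complex.normSq (y.2 w)) := by ring
    rw [this]
    exact mul_le_mul_of_nonneg_right (hB2 w)
      (mul_nonneg (sq_nonneg _) (Complex.normSq_nonneg _))

lemma vnorm_sq_eq (m : ℕ) (Y : Fin m → MS K) :
    ‖eucVec K m Y‖ = Real.sqrt (∑ j, msq K (Y j)) := by
  rw [EuclideanSpace.norm_eq]
  congr 1
  rw [Fintype.sum_prod_type]
  exact Finset.sum_congr rfl fun j _ => Finset.sum_congr rfl fun q _ => by
    rw [Real.norm_eq_abs, sq_abs]; rfl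

lemma vnorm_mul_le (m : ℕ) (z : MS K) (Y : Fin m → MS K) :
    ‖eucVec K m (fun j => z * Y j)‖ ≤ (‖eucMap K z‖ / sK K) * ‖eucVec K m Y‖ := by
  have hs := sK_pos K
  rw [vnorm_sq_eq, vnorm_sq_eq, eucMap_norm_eq]
  have h1 : ∑ j, msq K (z * Y j) ≤ (msq K z / (sK K)^2) * ∑ j, msq K (Y j) := by
    rw [Finset.mul_sum]
    exact Finset.sum_le_sum fun j _ => msq_mul_le K z (Y j)
  calc Real.sqrt (∑ j, msq K (z * Y j))
      ≤ Real.sqrt ((msq K z / (sK K)^2) * ∑ j, msq K (Y j)) := Real.sqrt_le_sqrt h1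
    _ = (Real.sqrt (msq K z) / sK K) * Real.sqrt (∑ j, msq K (Y j)) := by
        rw [Real.sqrt_mul (div_nonneg (msq_nonneg K z) (sq_nonneg _)),
          Real.sqrt_div (msq_nonneg K z), Real.sqrt_sq hs.le]

/-- The additive map `K^m → K_ℝ^m → EuclideanSpace` used to build lattices. -/
def geAdd (m : ℕ) : (Fin m → K) →+ (EuclideanSpace ℝ (Fin m × RIx K)) where
  toFun x := eucVec K m (fun j => NumberField.mixedEmbedding K (x j))
  map_zero' := by
    show eucVec K m (fun j => NumberField.mixedEmbedding K ((0 : Fin m → K) j)) = 0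
    have : (fun j : Fin m => NumberField.mixedEmbedding K ((0 : Fin m → K) j)) = 0 := by
      funext j; simp
    rw [this, map_zero]
  map_add' x y := by
    show eucVec K m (fun j => NumberField.mixedEmbedding K ((x + y) j))
      = eucVec K m (fun j => NumberField.mixedEmbedding K (x j))
        + eucVec K m (fun j => NumberField.mixedEmbedding K (y j))
    have : (fun j : Fin m => NumberField.mixedEmbedding K ((x + y) j))
        = (fun j => NumberField.mixedEmbedding K (x j)) + (fun j => NumberField.mixedEmbedding K (y j)) := by
      funext j; simp
    rw [this, map_add]

lemma geAdd_apply (m : ℕ) (x : Fin m → K) :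
    geAdd K m x = eucVec K m (fun j => NumberField.mixedEmbedding K (x j)) := rfl

lemma image_LamD_eq (m k : ℕ) (D : Matrix (Fin k) (Fin m) K) :
    (eucVec K m) '' LamD K D = (geAdd K m) '' rowSpanInt K D := by
  rw [LamD, Set.image_image]
  rfl

/-- `ge` of a vector in the `K`-span of a finite family lies in the real span of the
`ge`-images of integral-basis multiples of the family. -/
lemma geAdd_mem_spanR {m : ℕ} {ι₂ : Type} [Fintype ι₂] (f : ι₂ → (Fin m → K)) {x : Fin m → K}
    (hx : x ∈ Submodule.span K (Set.range f)) :
    geAdd K m x ∈ Submodule.span ℝ (Set.range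
      (fun p : ι₂ × (Module.Free.ChooseBasisIndex ℤ (𝓞 K)) =>
        geAdd K m ((NumberField.integralBasis K p.2 : K) • f p.1))) := by
  rw [mem_span_range_iff_exists_fun] at hx
  obtain ⟨c, hc⟩ := hx
  have hx' : x = ∑ i, ∑ t, ((NumberField.integralBasis K).repr (c i) t : K) •
      ((NumberField.integralBasis K t : K) • f i) := by
    rw [← hc]
    refine Finset.sum_congr rfl fun i _ => ?_
    have hci : c i = ∑ t, (((NumberField.integralBasis K).repr (c i) t : ℚ) : K) *
        (NumberField.integralBasis K t : K) := by
      conv_lhs => rw [← Basis.sum_repr (NumberField.integralBasis K) (c i)]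
      exact Finset.sum_congr rfl fun t _ => Rat.smul_def _ _
    conv_lhs => rw [hci]
    rw [Finset.sum_smul]
    refine Finset.sum_congr rfl fun t _ => ?_
    rw [mul_smul]
  rw [hx', map_sum]
  refine Submodule.sum_mem _ fun i _ => ?_
  rw [map_sum]
  refine Submodule.sum_mem _ fun t _ => ?_
  have : (geAdd K m) ((((NumberField.integralBasis K).repr (c i) t : ℚ) : K) •
      ((NumberField.integralBasis K t : K) • f i))
      = (((NumberField.integralBasis K).repr (c i) t : ℚ) : ℝ) •
        geAdd K m ((NumberField.integralBasis K t : K) • f i) :=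
    map_ratCast_smul (geAdd K m) K ℝ _ _
  rw [this]
  exact Submodule.smul_mem _ _ (Submodule.subset_span ⟨(i, t), rfl⟩)

/-- The big integral lattice basis of the Euclidean model of `K_ℝ^m`. -/
def bigB (m : ℕ) : Basis (Σ _ : Fin m, Module.Free.ChooseBasisIndex ℤ (𝓞 K)) ℝ
    (EuclideanSpace ℝ (Fin m × RIx K)) :=
  (Pi.basis fun _ : Fin m => NumberField.mixedEmbedding.latticeBasis K).map (eucVec K m)

lemma geAdd_mem_bigB_span {m : ℕ} (x : Fin m → K) (hx : ∀ j, IsIntegral ℤ (x j)) :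
    geAdd K m x ∈ Submodule.span ℤ (Set.range (bigB K m)) := by
  classical
  set y : Fin m → 𝓞 K := fun j => ⟨x j, hx j⟩ with hy
  have hxy : x = fun j => algebraMap (𝓞 K) K (y j) := by funext j; rfl
  set bPi : Basis (Σ _ : Fin m, Module.Free.ChooseBasisIndex ℤ (𝓞 K)) ℤ (Fin m → 𝓞 K) :=
    Pi.basis (fun _ : Fin m => NumberField.RingOfIntegers.basis K) with hbPi
  have hyrep : y = ∑ p, bPi.repr y p • bPi p := (Basis.sum_repr _ _).symm
  have key : ∀ v : Fin m → 𝓞 K, geAdd K m (fun j => algebraMap (𝓞 K) K (v j))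
      ∈ Submodule.span ℤ (Set.range (bigB K m)) := by
    intro v
    have hrep := (Basis.sum_repr bPi v).symm
    have : (fun j => algebraMap (𝓞 K) K (v j))
        = ∑ p, bPi.repr v p • (fun j => algebraMap (𝓞 K) K (bPi p j)) := by
      conv_lhs => rw [hrep]
      funext j
      simp only [Finset.sum_apply, Pi.smul_apply, map_sum, map_zsmul, zsmul_eq_mul]
      push_cast
      rfl
    rw [this, map_sum]
    refine Submodule.sum_mem _ fun p _ => ?_
    rw [AddMonoidHom.map_zsmul]
    refine Submodule.smul_mem _ _ (Submodule.subset_span ⟨p, ?_⟩)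
    -- bigB p = geAdd of the p-th integral basis vector
    rcases p with ⟨j, t⟩
    rw [bigB, Basis.map_apply, geAdd_apply]
    congr 1
    have h1 : (Pi.basis fun _ : Fin m => NumberField.mixedEmbedding.latticeBasis K) ⟨j, t⟩
        = Pi.single j (NumberField.mixedEmbedding.latticeBasis K t) := by
      rw [Pi.basis_apply]
    have h2 : bPi ⟨j, t⟩ = Pi.single j (NumberField.RingOfIntegers.basis K t) := by
      rw [hbPi, Pi.basis_apply]
    rw [h1, h2]
    funext j'
    by_cases hj : j' = j
    · subst hj
      simp only [Pi.single_eq_same]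
      rw [NumberField.mixedEmbedding.latticeBasis_apply, NumberField.integralBasis_apply]
    · simp only [Pi.single_eq_of_ne hj]
      simp
  have := key y
  rwa [← hxy] at this

lemma mnorm_eq (n m : ℕ) (A' : Matrix (Fin n) (Fin m) (MS K)) :
    mnorm K A' = Real.sqrt (∑ i, ∑ j, msq K (A' i j)) := by
  rw [mnorm, EuclideanSpace.norm_eq]
  congr 1
  rw [Fintype.sum_prod_type]
  refine Finset.sum_congr rfl fun i _ => ?_
  rw [Fintype.sum_prod_type]
  exact Finset.sum_congr rfl fun j _ => Finset.sum_congr rfl fun q _ => by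
    rw [Real.norm_eq_abs, sq_abs]; rfl

lemma row_norm_le (n m : ℕ) (A' : Matrix (Fin n) (Fin m) (MS K)) (i : Fin n) :
    ‖eucVec K m (A' i)‖ ≤ mnorm K A' := by
  rw [vnorm_sq_eq, mnorm_eq]
  apply Real.sqrt_le_sqrt
  exact Finset.single_le_sum (f := fun i' => ∑ j, msq K (A' i' j))
    (fun i' _ => Finset.sum_nonneg fun j _ => msq_nonneg K _) (Finset.mem_univ i)

end Paper
end NormLemmas

theorem height_upper_bound_in_F (K : Type) [Field K] [NumberField K]
    (n m k : ℕ) (hk : 1 ≤ k) (hkm : k ≤ m) (hmn : m < n)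
    (csup : ℝ) (hcsup : 0 < csup) :
    ∃ C : ℝ, 0 < C ∧ ∀ T : ℝ, 1 ≤ T →
      ∀ D : Matrix (Fin k) (Fin m) K, D ∈ FkT K csup n k m T →
        hgtD K D ≤ C * T ^ (k * Module.finrank ℚ K) := by
  classical
  set d' := Module.finrank ℚ K with hd'
  have hcard' : Fintype.card (Module.Free.ChooseBasisIndex ℤ (𝓞 K)) = d' := by
    rw [hd', ← RingOfIntegers.rank K, Module.finrank_eq_card_chooseBasisIndex]
  set cKs : ℝ := ∑ t : Module.Free.ChooseBasisIndex ℤ (𝓞 K),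
    ‖eucMap K (mixedEmbedding K (integralBasis K t))‖ / sK K with hcKs
  have hcKs0 : 0 ≤ cKs :=
    Finset.sum_nonneg fun t _ => div_nonneg (norm_nonneg _) (sK_pos K).le
  set γ : ℝ := 1 + 2 * ((k * d' : ℕ) : ℝ) * (cKs * csup) with hγ
  have hγ1 : (1:ℝ) ≤ γ := by
    have : (0:ℝ) ≤ 2 * ((k * d' : ℕ) : ℝ) * (cKs * csup) := by positivity
    linarith
  refine ⟨γ ^ (k * d'), pow_pos (lt_of_lt_of_le one_pos hγ1) _, fun T hT D hD => ?_⟩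
  obtain ⟨-, A, hArows, hArank, hAnorm⟩ := hD
  have hT0 : (0:ℝ) < T := lt_of_lt_of_le one_pos hT
  -- the lattice and its real span
  set L : Submodule ℤ (EuclideanSpace ℝ (Fin m × RIx K)) :=
    Submodule.span ℤ ((eucVec K m) '' LamD K D) with hL
  set W : Submodule ℝ (EuclideanSpace ℝ (Fin m × RIx K)) :=
    Submodule.span ℝ (L : Set (EuclideanSpace ℝ (Fin m × RIx K))) with hW
  -- row space facts
  have hrowD : ∀ x ∈ rowSpanInt K D, x ∈ Submodule.span K (Set.range (fun i : Fin k => D i)) := by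
    rintro x ⟨⟨c, hc⟩, -⟩
    rw [hc]
    have : (fun j => ∑ i, c i * D i j) = ∑ i, c i • (fun l : Fin k => D l) i := by
      funext j
      simp [Finset.sum_apply]
    rw [this]
    exact Submodule.sum_mem _ fun i _ =>
      Submodule.smul_mem _ _ (Submodule.subset_span ⟨i, rfl⟩)
  have h_le : Submodule.span K (Set.range (fun i : Fin n => A i))
      ≤ Submodule.span K (Set.range (fun i : Fin k => D i)) := by
    rw [Submodule.span_le]
    rintro _ ⟨i, rfl⟩
    exact hrowD _ (hArows i)
  have hfinA : Module.finrank K (Submodule.span K (Set.range (fun i : Fin n => A i))) = k := by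
    have := Matrix.rank_eq_finrank_span_row A
    rw [hArank] at this
    exact this.symm
  have hfinD : Module.finrank K (Submodule.span K (Set.range (fun i : Fin k => D i))) ≤ k := by
    refine le_trans (finrank_span_le_card _) ?_
    rw [Set.toFinset_range]
    exact le_trans (Finset.card_image_le) (by simp)
  have hspan_eq : Submodule.span K (Set.range (fun i : Fin n => A i))
      = Submodule.span K (Set.range (fun i : Fin k => D i)) :=
    Submodule.eq_of_le_of_finrank_le h_le (by rw [hfinA]; exact hfinD)
  have hx_memA : ∀ x ∈ rowSpanInt K D,
      x ∈ Submodule.span K (Set.range (fun i : Fin n => A i)) := by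
    intro x hx
    rw [hspan_eq]
    exact hrowD x hx
  -- the generating vectors
  set evx : (Fin n × Module.Free.ChooseBasisIndex ℤ (𝓞 K)) → EuclideanSpace ℝ (Fin m × RIx K) :=
    fun p => geAdd K m ((integralBasis K p.2 : K) • (fun i : Fin n => A i) p.1) with hevx
  have hxvec : ∀ p : Fin n × Module.Free.ChooseBasisIndex ℤ (𝓞 K),
      ((integralBasis K p.2 : K) • (fun i : Fin n => A i) p.1) ∈ rowSpanInt K D := by
    rintro ⟨i, t⟩
    obtain ⟨⟨c, hc⟩, hint⟩ := hArows i
    constructor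
    · refine ⟨fun l => (integralBasis K t : K) * c l, ?_⟩
      funext j
      have : A i j = ∑ l, c l * D l j := congrFun hc j
      simp only [Pi.smul_apply, smul_eq_mul, this, Finset.mul_sum]
      exact Finset.sum_congr rfl fun l _ => by ring
    · intro j
      have h1 : IsIntegral ℤ (integralBasis K t : K) := by
        rw [integralBasis_apply]
        exact RingOfIntegers.isIntegral_coe _
      exact h1.mul (hint j)
  have hevxL : ∀ p, evx p ∈ L := by
    intro p
    apply Submodule.subset_span
    rw [image_LamD_eq]
    exact ⟨_, hxvec p, rfl⟩
  have hLW : (L : Set (EuclideanSpace ℝ (Fin m × RIx K))) ⊆ (W : Set _) := Submodule.subset_span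
  -- W is spanned by the evx
  have hWevx : W ≤ Submodule.span ℝ (Set.range evx) := by
    rw [hW, Submodule.span_le]
    have hres : L ≤ (Submodule.span ℝ (Set.range evx)).restrictScalars ℤ := by
      rw [hL, Submodule.span_le, image_LamD_eq]
      rintro _ ⟨x, hx, rfl⟩
      show geAdd K m x ∈ Submodule.span ℝ (Set.range evx)
      exact geAdd_mem_spanR K (fun i : Fin n => A i) (hx_memA x hx)
    exact fun v hv => hres hv
  -- dimension bound : finrank W ≤ k * d'
  have hrW : Module.finrank ℝ W ≤ k * d' := by
    have hWgD : W ≤ Submodule.span ℝ (Set.range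
        (fun p : (Fin k) × Module.Free.ChooseBasisIndex ℤ (𝓞 K) =>
          geAdd K m ((integralBasis K p.2 : K) • (fun i : Fin k => D i) p.1))) := by
      rw [hW, Submodule.span_le]
      have hres : L ≤ (Submodule.span ℝ (Set.range
          (fun p : (Fin k) × Module.Free.ChooseBasisIndex ℤ (𝓞 K) =>
            geAdd K m ((integralBasis K p.2 : K) • (fun i : Fin k => D i) p.1)))).restrictScalars ℤ := by
        rw [hL, Submodule.span_le, image_LamD_eq]
        rintro _ ⟨x, hx, rfl⟩
        exact geAdd_mem_spanR K (fun i : Fin k => D i) (hrowD x hx)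
      exact fun v hv => hres hv
    refine le_trans (Submodule.finrank_mono hWgD) (le_trans (finrank_span_le_card _) ?_)
    rw [Set.toFinset_range]
    refine le_trans (Finset.card_image_le) ?_
    simp [hcard']
  -- norm bound for the generators
  have hevx_norm : ∀ p, ‖evx p‖ ≤ cKs * (csup * T) := by
    rintro ⟨i, t⟩
    have h1 : evx (i, t) = eucVec K m (fun j =>
        mixedEmbedding K (integralBasis K t) * (A.map (mixedEmbedding K)) i j) := by
      rw [hevx]
      show geAdd K m _ = _
      rw [geAdd_apply]
      congr 1
      funext j
      simp only [Pi.smul_apply, smul_eq_mul, _root_.map_mul, Matrix.map_apply]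
    rw [h1]
    have h2 := vnorm_mul_le K m (mixedEmbedding K (integralBasis K t))
      (fun j => (A.map (mixedEmbedding K)) i j)
    refine le_trans h2 ?_
    have h3 : ‖eucVec K m (fun j => (A.map (mixedEmbedding K)) i j)‖ ≤ csup * T :=
      le_trans (row_norm_le K n m (A.map (mixedEmbedding K)) i) hAnorm
    have h4 : ‖eucMap K (mixedEmbedding K (integralBasis K t))‖ / sK K ≤ cKs := by
      rw [hcKs]
      exact Finset.single_le_sum
        (f := fun t' => ‖eucMap K (mixedEmbedding K (integralBasis K t'))‖ / sK K)
        (fun t' _ => div_nonneg (norm_nonneg _) (sK_pos K).le) (Finset.mem_univ t)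
    exact mul_le_mul h4 h3 (norm_nonneg _) hcKs0
  -- extract a basis of W from the evx
  obtain ⟨tset, htsub, htspan, htli⟩ := exists_linearIndependent ℝ (Set.range evx)
  have htW : ∀ x ∈ tset, x ∈ W := by
    intro x hx
    obtain ⟨p, rfl⟩ := htsub hx
    exact hLW (hevxL p)
  have htspanW : Submodule.span ℝ tset = W := by
    refine le_antisymm (Submodule.span_le.2 fun x hx => htW x hx) ?_
    rw [htspan]
    exact hWevx
  haveI : Fintype ↥tset := (htli.setFinite).fintype
  set vfun : ↥tset → ↥W := fun i => ⟨i.1, htW _ i.2⟩ with hvfun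
  have hli' : LinearIndependent ℝ vfun := by
    apply LinearIndependent.of_comp (W.subtype)
    have : (W.subtype ∘ vfun) = (fun x : ↥tset => (x : EuclideanSpace ℝ (Fin m × RIx K))) := rfl
    rw [this]
    exact htli
  have hsp' : ⊤ ≤ Submodule.span ℝ (Set.range vfun) := by
    have hmap : Submodule.map W.subtype (Submodule.span ℝ (Set.range vfun))
        = Submodule.map W.subtype ⊤ := by
      rw [Submodule.map_span, Submodule.map_top, Submodule.range_subtype]
      have himg : (W.subtype '' Set.range vfun) = tset := by
        rw [← Set.range_comp]
        have : (W.subtype ∘ vfun) = (fun x : ↥tset => (x : EuclideanSpace ℝ (Fin m × RIx K))) := rfl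
        rw [this, Subtype.range_coe]
      rw [himg, htspanW]
    exact le_of_eq (Submodule.map_injective_of_injective (Submodule.injective_subtype W) hmap).symm
  set bW : Basis ↥tset ℝ ↥W := Basis.mk hli' hsp' with hbW
  set c : Basis ↥tset ℝ (EuclideanSpace ℝ (Fin (Module.finrank ℝ ↥W))) :=
    bW.map (stdOrthonormalBasis ℝ ↥W).repr.toLinearEquiv with hc
  -- the image lattice
  set Λ : Submodule ℤ (EuclideanSpace ℝ (Fin (Module.finrank ℝ ↥W))) :=
    (L.comap ((W.subtype).restrictScalars ℤ)).map
      (((stdOrthonormalBasis ℝ ↥W).repr.toLinearEquiv.restrictScalars ℤ).toLinearMap) with hΛ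
  have hgt_eq : hgtD K D = ZLattice.covolume Λ volume := rfl
  -- instances
  haveI hdiscL : DiscreteTopology ↥L := by
    have hsub : (L : Set (EuclideanSpace ℝ (Fin m × RIx K)))
        ⊆ (Submodule.span ℤ (Set.range (bigB K m)) : Set _) := by
      rw [hL]
      refine Submodule.span_le.2 ?_
      rw [image_LamD_eq]
      rintro _ ⟨x, hx, rfl⟩
      exact geAdd_mem_bigB_span K x hx.2
    have hMdisc : DiscreteTopology
        ↥((Submodule.span ℤ (Set.range (bigB K m)) : Submodule ℤ _) :
          Set (EuclideanSpace ℝ (Fin m × RIx K))) :=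
      inferInstanceAs (DiscreteTopology ↥(Submodule.span ℤ (Set.range (bigB K m))))
    exact DiscreteTopology.of_subset hMdisc hsub
  haveI hdLW : DiscreteTopology ↥(L.comap ((W.subtype).restrictScalars ℤ)) :=
    ZLattice.comap_discreteTopology ℝ L (e := W.subtype)
      continuous_subtype_val (Submodule.injective_subtype W)
  haveI hdΛ : DiscreteTopology ↥Λ := by
    have heq : Λ = ZLattice.comap ℝ (L.comap ((W.subtype).restrictScalars ℤ))
        ((stdOrthonormalBasis ℝ ↥W).repr.symm.toLinearEquiv.toLinearMap) := by
      ext x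
      rw [hΛ, Submodule.mem_map_equiv]
      rfl
    rw [heq]
    exact ZLattice.comap_discreteTopology ℝ _
      (stdOrthonormalBasis ℝ ↥W).repr.symm.continuous
      (stdOrthonormalBasis ℝ ↥W).repr.symm.injective
  have hcΛ : ∀ i, c i ∈ Λ := by
    intro i
    rw [hc, Basis.map_apply, hΛ]
    refine Submodule.mem_map.2 ⟨bW i, ?_, rfl⟩
    rw [Submodule.mem_comap]
    show ((bW i : ↥W) : EuclideanSpace ℝ (Fin m × RIx K)) ∈ L
    rw [hbW, Basis.mk_apply]
    obtain ⟨p, hp⟩ := htsub i.2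
    show (i : EuclideanSpace ℝ (Fin m × RIx K)) ∈ L
    rw [← hp]
    exact hevxL p
  haveI hzl : IsZLattice ℝ Λ := by
    constructor
    refine le_antisymm le_top ?_
    rw [← c.span_eq]
    exact Submodule.span_mono (fun x ⟨i, hi⟩ => hi ▸ hcΛ i)
  -- the covering bound
  have hcardt : (Fintype.card ↥tset : ℝ) ≤ ((k * d' : ℕ) : ℝ) := by
    have h1 : Fintype.card ↥tset = Module.finrank ℝ (EuclideanSpace ℝ (Fin (Module.finrank ℝ ↥W))) :=
      (Module.finrank_eq_card_basis c).symm
    rw [h1, finrank_euclideanSpace, Fintype.card_fin]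
    exact_mod_cast hrW
  have hRsum : ∑ i : ↥tset, ‖c i‖ ≤ ((k * d' : ℕ) : ℝ) * (cKs * (csup * T)) := by
    have hinorm : ∀ i : ↥tset, ‖c i‖ ≤ cKs * (csup * T) := by
      intro i
      rw [hc, Basis.map_apply]
      have h1 : ‖(stdOrthonormalBasis ℝ ↥W).repr.toLinearEquiv (bW i)‖ = ‖bW i‖ :=
        (stdOrthonormalBasis ℝ ↥W).repr.norm_map (bW i)
      rw [h1, hbW, Basis.mk_apply]
      have h2 : ‖vfun i‖ = ‖(i : EuclideanSpace ℝ (Fin m × RIx K))‖ := rfl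
      rw [h2]
      obtain ⟨p, hp⟩ := htsub i.2
      rw [← hp]
      exact hevx_norm p
    calc ∑ i : ↥tset, ‖c i‖ ≤ ∑ _i : ↥tset, (cKs * (csup * T)) :=
          Finset.sum_le_sum fun i _ => hinorm i
      _ = (Fintype.card ↥tset : ℝ) * (cKs * (csup * T)) := by
          rw [Finset.sum_const, Finset.card_univ, nsmul_eq_mul]
      _ ≤ ((k * d' : ℕ) : ℝ) * (cKs * (csup * T)) := by
          refine mul_le_mul_of_nonneg_right hcardt (by positivity)
  have hcov := covol_le (Module.finrank ℝ ↥W) Λ c hcΛ hRsum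
  rw [hgt_eq]
  refine le_trans hcov ?_
  -- final numeric bound
  set R := ((k * d' : ℕ) : ℝ) * (cKs * (csup * T)) with hR
  have hR0 : 0 ≤ R := by positivity
  have h2R : 2 * R ≤ γ * T := by
    rw [hR, hγ]
    nlinarith [mul_nonneg (mul_nonneg (Nat.cast_nonneg (k * d')) hcKs0) hcsup.le]
  have hγT1 : (1:ℝ) ≤ γ * T := by nlinarith
  calc (2*R) ^ Module.finrank ℝ ↥W ≤ (γ * T) ^ Module.finrank ℝ ↥W :=
        pow_le_pow_left₀ (by linarith) h2R _
    _ ≤ (γ * T) ^ (k * d') := pow_le_pow_right₀ hγT1 hrW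
    _ = γ ^ (k * d') * T ^ (k * d') := mul_pow _ _ _
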